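/- Let n ≥ 1 and let G0 be an induced subgraph of the n-blow-up of the 5-cycle C5 with |V(G0)| = pn + q, where p, q are nonnegative integers with p < 5 and q < n. Then e(G0) ≥ f(n,p,q), where f(n,p,q) = 0 if p ≤ 1; qn if p = 2; n² + 2qn if p = 3; and 3n² + 2qn if p = 4. -/

import Mathlib

open scoped Classical

/-- The number of edges of `G` with both endpoints in `A`. -/
noncomputable def edgesIn {V : Type*} [Fintype V] (G : SimpleGraph V) (A : Finset V) : ℕ :=
  (G.edgeFinset.filter fun e => ∀ v ∈ e, v ∈ A).card

/-- The `n`-blow-up of the 5-cycle: classes `A_i = {i} × Fin n`, with `x` adjacent to `y`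
iff their classes are consecutive on the cycle. -/
def C5blowup (n : ℕ) : SimpleGraph (Fin 5 × Fin n) where
  Adj x y := ((y.1 : ZMod 5) = (x.1 : ZMod 5) + 1) ∨ ((x.1 : ZMod 5) = (y.1 : ZMod 5) + 1)
  symm := ⟨by intro x y h; tauto⟩
  loopless := ⟨by intro x h; rcases h with h | h <;> simp at h⟩

-- case 1 helper: rotation with the "heavy" nonadjacent pair being (a1,a3)
lemma case1 (n q a0 a1 a2 a3 a4 : ℤ) (h2 : 0 ≤ a2) (h4 : 0 ≤ a4) (h0 : 0 ≤ a0)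
    (c0 : a0 ≤ n) (c1 : a1 ≤ n) (c3 : a3 ≤ n) (c4 : a4 ≤ n)
    (hpair : n ≤ a1 + a3) (hs : a0 + a1 + a2 + a3 + a4 = 2*n + q) :
    q * n ≤ a0*a1 + a1*a2 + a2*a3 + a3*a4 + a4*a0 := by
  nlinarith [mul_nonneg (sub_nonneg.2 c0) (sub_nonneg.2 c1),
    mul_nonneg (sub_nonneg.2 c3) (sub_nonneg.2 c4),
    mul_nonneg h2 (by linarith : (0:ℤ) ≤ a1 + a3 - n),
    mul_nonneg h4 h0]

lemma key2 (n q a0 a1 a2 a3 a4 : ℤ) (h0 : 0 ≤ a0) (h1 : 0 ≤ a1) (h2 : 0 ≤ a2)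
    (h3 : 0 ≤ a3) (h4 : 0 ≤ a4) (c0 : a0 ≤ n) (c1 : a1 ≤ n) (c2 : a2 ≤ n)
    (c3 : a3 ≤ n) (c4 : a4 ≤ n) (hq : 0 ≤ q)
    (hs : a0 + a1 + a2 + a3 + a4 = 2*n + q) :
    q * n ≤ a0*a1 + a1*a2 + a2*a3 + a3*a4 + a4*a0 := by
  by_cases p13 : n ≤ a1 + a3
  · exact case1 n q a0 a1 a2 a3 a4 h2 h4 h0 c0 c1 c3 c4 p13 hs
  by_cases p24 : n ≤ a2 + a4
  · have := case1 n q a1 a2 a3 a4 a0 h3 h0 h1 c1 c2 c4 c0 p24 (by linarith)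
    linarith [this]
  by_cases p30 : n ≤ a3 + a0
  · have := case1 n q a2 a3 a4 a0 a1 h4 h1 h2 c2 c3 c0 c1 p30 (by linarith)
    linarith [this]
  by_cases p41 : n ≤ a4 + a1
  · have := case1 n q a3 a4 a0 a1 a2 h0 h2 h3 c3 c4 c1 c2 p41 (by linarith)
    linarith [this]
  by_cases p02 : n ≤ a0 + a2
  · have := case1 n q a4 a0 a1 a2 a3 h1 h3 h4 c4 c0 c2 c3 p02 (by linarith)
    linarith [this]
  · -- all nonadjacent pair sums < n, hence every a_j ≥ q
    push_neg at p13 p24 p30 p41 p02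
    have ha0 : q ≤ a0 := by linarith
    have ha1 : q ≤ a1 := by linarith
    have ha2 : q ≤ a2 := by linarith
    have ha3 : q ≤ a3 := by linarith
    have ha4 : q ≤ a4 := by linarith
    nlinarith [mul_nonneg (sub_nonneg.2 ha0) h1, mul_nonneg (sub_nonneg.2 ha1) h2,
      mul_nonneg (sub_nonneg.2 ha2) h3, mul_nonneg (sub_nonneg.2 ha3) h4,
      mul_nonneg (sub_nonneg.2 ha4) h0, mul_nonneg hq (by linarith : (0:ℤ) ≤ n + q)]

lemma key3 (n q a0 a1 a2 a3 a4 : ℤ) (c0 : a0 ≤ n) (c1 : a1 ≤ n) (c2 : a2 ≤ n)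
    (c3 : a3 ≤ n) (c4 : a4 ≤ n)
    (hs : a0 + a1 + a2 + a3 + a4 = 3*n + q) :
    n^2 + 2*q*n ≤ a0*a1 + a1*a2 + a2*a3 + a3*a4 + a4*a0 := by
  have hns : n * (a0+a1+a2+a3+a4) = n*(3*n+q) := by rw [hs]
  nlinarith [hns, mul_nonneg (sub_nonneg.2 c0) (sub_nonneg.2 c1),
    mul_nonneg (sub_nonneg.2 c1) (sub_nonneg.2 c2),
    mul_nonneg (sub_nonneg.2 c2) (sub_nonneg.2 c3),
    mul_nonneg (sub_nonneg.2 c3) (sub_nonneg.2 c4),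
    mul_nonneg (sub_nonneg.2 c4) (sub_nonneg.2 c0)]

lemma key4 (n q a0 a1 a2 a3 a4 : ℤ) (c0 : a0 ≤ n) (c1 : a1 ≤ n) (c2 : a2 ≤ n)
    (c3 : a3 ≤ n) (c4 : a4 ≤ n)
    (hs : a0 + a1 + a2 + a3 + a4 = 4*n + q) :
    3*n^2 + 2*q*n ≤ a0*a1 + a1*a2 + a2*a3 + a3*a4 + a4*a0 := by
  have hns : n * (a0+a1+a2+a3+a4) = n*(4*n+q) := by rw [hs]
  nlinarith [hns, mul_nonneg (sub_nonneg.2 c0) (sub_nonneg.2 c1),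
    mul_nonneg (sub_nonneg.2 c1) (sub_nonneg.2 c2),
    mul_nonneg (sub_nonneg.2 c2) (sub_nonneg.2 c3),
    mul_nonneg (sub_nonneg.2 c3) (sub_nonneg.2 c4),
    mul_nonneg (sub_nonneg.2 c4) (sub_nonneg.2 c0)]

lemma edgesIn_eq (n : ℕ) (G0 : Finset (Fin 5 × Fin n)) :
    edgesIn (C5blowup n) G0 =
      ∑ c : ZMod 5, (G0.filter fun v => (v.1 : ZMod 5) = c).card *
        (G0.filter fun v => (v.1 : ZMod 5) = c + 1).card := by
  classical
  set S : ZMod 5 → Finset (Fin 5 × Fin n) := fun c => G0.filter fun v => (v.1 : ZMod 5) = c with hS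
  set T : Finset ((Fin 5 × Fin n) × (Fin 5 × Fin n)) :=
    (G0 ×ˢ G0).filter (fun p => ((p.2.1 : ZMod 5) = (p.1.1 : ZMod 5) + 1)) with hTdef
  have hbij : T.card = edgesIn (C5blowup n) G0 := by
    apply Finset.card_bij (fun p _ => Sym2.mk p.1 p.2)
    · rintro ⟨x, y⟩ hp
      simp only [hTdef, Finset.mem_filter, Finset.mem_product] at hp
      obtain ⟨⟨hx, hy⟩, hadj⟩ := hp
      simp only [edgesIn, Finset.mem_filter, SimpleGraph.mem_edgeFinset,
        SimpleGraph.mem_edgeSet]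
      refine ⟨Or.inl hadj, ?_⟩
      intro v hv
      rw [Sym2.mem_iff] at hv
      rcases hv with rfl | rfl <;> assumption
    · rintro ⟨x, y⟩ hp ⟨x', y'⟩ hp' h
      simp only [hTdef, Finset.mem_filter, Finset.mem_product] at hp hp'
      rw [Sym2.mk_eq_mk_iff] at h    -- guess name
      rcases h with h | h
      · exact h
      · -- swapped: contradiction
        exfalso
        rw [Prod.ext_iff] at h
        obtain ⟨h5, h6⟩ := h
        have h1 := hp.2
        have h2 := hp'.2
        have h5' : x = y' := h5
        have h6' : y = x' := h6
        subst h5' h6'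
        rw [h2] at h1
        exact (by decide : ∀ z : ZMod 5, ¬ z = z + 1 + 1) _ h1
    · intro e he
      simp only [edgesIn, Finset.mem_filter, SimpleGraph.mem_edgeFinset,
        SimpleGraph.mem_edgeSet] at he
      induction e using Sym2.ind with
      | _ x y =>
        obtain ⟨hadj, hmem⟩ := he
        have hx : x ∈ G0 := hmem x (by simp)
        have hy : y ∈ G0 := hmem y (by simp)
        rcases hadj with h | h
        · exact ⟨(x, y), Finset.mem_filter.2 ⟨Finset.mem_product.2 ⟨hx, hy⟩, h⟩, rfl⟩
        · exact ⟨(y, x), Finset.mem_filter.2 ⟨Finset.mem_product.2 ⟨hy, hx⟩, h⟩, Sym2.eq_swap⟩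
  have hT : T = Finset.univ.biUnion (fun c : ZMod 5 => (S c) ×ˢ (S (c + 1))) := by
    ext ⟨x, y⟩
    simp only [hTdef, hS, Finset.mem_filter, Finset.mem_product, Finset.mem_biUnion,
      Finset.mem_univ, true_and]
    constructor
    · rintro ⟨⟨hx, hy⟩, hadj⟩
      exact ⟨(x.1 : ZMod 5), ⟨hx, rfl⟩, ⟨hy, hadj⟩⟩
    · rintro ⟨c, ⟨hx, hcx⟩, hy, hcy⟩
      exact ⟨⟨hx, hy⟩, by rw [hcy, hcx]; rfl⟩
  rw [← hbij, hT, Finset.card_biUnion]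
  · simp [Finset.card_product, hS]; congr!
  · intro c _ d _ hcd
    refine Finset.disjoint_left.2 ?_
    rintro ⟨x, y⟩ hm hm'
    simp only [Finset.mem_product, hS, Finset.mem_filter] at hm hm'
    exact hcd (hm.1.2.symm.trans hm'.1.2)

lemma cast_inj_fin5 : ∀ i j : Fin 5, (i : ZMod 5) = (j : ZMod 5) → i = j := by decide

lemma filter_card_le (n : ℕ) (G0 : Finset (Fin 5 × Fin n)) (c : ZMod 5) :
    (G0.filter fun v => (v.1 : ZMod 5) = c).card ≤ n := by
  classical
  have h := Finset.card_le_card_of_injOn (fun v => v.2)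
    (fun v _ => Finset.mem_univ (α := Fin n) v.2) (s := G0.filter fun v => (v.1 : ZMod 5) = c) ?_
  · simpa using h
  · rintro v hv w hw h
    simp only [Finset.coe_filter, Set.mem_setOf_eq] at hv hw
    have h1 : v.1 = w.1 := cast_inj_fin5 _ _ (hv.2.trans hw.2.symm)
    exact Prod.ext h1 h

lemma sum_zmod5 (f : ZMod 5 → ℕ) : ∑ c : ZMod 5, f c = f 0 + f 1 + f 2 + f 3 + f 4 := by
  rw [show (Finset.univ : Finset (ZMod 5)) = {0, 1, 2, 3, 4} from by decide]
  rw [show ({0, 1, 2, 3, 4} : Finset (ZMod 5)) = insert 0 (insert 1 (insert 2 (insert 3 {4}))) from rfl]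
  rw [Finset.sum_insert (by decide), Finset.sum_insert (by decide),
    Finset.sum_insert (by decide), Finset.sum_insert (by decide), Finset.sum_singleton]
  ring

theorem stmt_12 (n p q : ℕ) (hn : 1 ≤ n) (hp : p < 5) (hq : q < n)
    (G0 : Finset (Fin 5 × Fin n)) (hcard : G0.card = p * n + q) :
    edgesIn (C5blowup n) G0 ≥
      if p ≤ 1 then 0
      else if p = 2 then q * n
      else if p = 3 then n ^ 2 + 2 * q * n
      else 3 * n ^ 2 + 2 * q * n := by
  classical
  set a : ZMod 5 → ℕ := fun c => (G0.filter fun v => (v.1 : ZMod 5) = c).card with ha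
  have hE : edgesIn (C5blowup n) G0 = a 0 * a 1 + a 1 * a 2 + a 2 * a 3 + a 3 * a 4 + a 4 * a 0 := by
    rw [edgesIn_eq, sum_zmod5 (fun c => a c * a (c + 1))]
    rw [show ((0 : ZMod 5) + 1) = 1 from by decide, show ((1 : ZMod 5) + 1) = 2 from by decide,
      show ((2 : ZMod 5) + 1) = 3 from by decide, show ((3 : ZMod 5) + 1) = 4 from by decide,
      show ((4 : ZMod 5) + 1) = 0 from by decide]
  have hsum : a 0 + a 1 + a 2 + a 3 + a 4 = p * n + q := by
    rw [← sum_zmod5 a, ha, ← hcard]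
    exact (Finset.card_eq_sum_card_fiberwise (fun v _ => Finset.mem_univ ((v.1 : ZMod 5)))).symm
  have hle : ∀ c, a c ≤ n := fun c => filter_card_le n G0 c
  -- cast to ℤ
  have h0 := hle 0; have h1 := hle 1; have h2 := hle 2; have h3 := hle 3; have h4 := hle 4
  interval_cases p
  · simp
  · simp
  · simp only [show ¬(2 ≤ 1) from by norm_num, if_false, if_pos rfl, ge_iff_le]
    zify at hsum h0 h1 h2 h3 h4 ⊢
    have := key2 (n : ℤ) (q : ℤ) (a 0) (a 1) (a 2) (a 3) (a 4)
      (by positivity) (by positivity) (by positivity) (by positivity) (by positivity)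
      h0 h1 h2 h3 h4 (by positivity) (by linarith)
    rw [hE]; push_cast; linarith
  · norm_num
    zify at hsum h0 h1 h2 h3 h4 ⊢
    have := key3 (n : ℤ) (q : ℤ) (a 0) (a 1) (a 2) (a 3) (a 4)
      h0 h1 h2 h3 h4 (by linarith)
    rw [hE]; push_cast; linarith
  · norm_num
    zify at hsum h0 h1 h2 h3 h4 ⊢
    have := key4 (n : ℤ) (q : ℤ) (a 0) (a 1) (a 2) (a 3) (a 4)
      h0 h1 h2 h3 h4 (by linarith)
    rw [hE]; push_cast; linarith
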